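/- Let 0 < p < q < ∞. If a linear operator T: L_0+L_q → L_0+L_q is a contraction on the couple (L_0, L_q), then T restricts to a contraction on L_p; in particular, L_p is an interpolation space for the couple (L_0, L_q). -/

import Mathlib

open MeasureTheory ENNReal Set Filter

noncomputable section

namespace CSZ

/-- Lebesgue measure on the half line `(0,∞)`. -/
def m0 : Measure ℝ := volume.restrict (Set.Ioi (0:ℝ))

/-- The right-continuous decreasing rearrangement `μ(t,f)` of a function on `(0,∞)`:
`μ(t,f) = inf {s ≥ 0 : m({|f| > s}) ≤ t}`. -/
def mu (f : ℝ → ℝ) (t : ℝ) : ℝ :=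
  sInf {s : ℝ | 0 ≤ s ∧ m0 {x | s < |f x|} ≤ ENNReal.ofReal t}

/-- Head majorization `g ≺≺_hd f` : `∫_0^t μ(s,g) ds ≤ ∫_0^t μ(s,f) ds` for all `t > 0`. -/
def HeadMaj (g f : ℝ → ℝ) : Prop :=
  ∀ t : ℝ, 0 < t →
    ∫⁻ s in Set.Ioc (0:ℝ) t, ENNReal.ofReal (mu g s) ≤
      ∫⁻ s in Set.Ioc (0:ℝ) t, ENNReal.ofReal (mu f s)

/-- Tail majorization `g ≺≺_tl f` : `∫_t^∞ μ(s,g) ds ≤ ∫_t^∞ μ(s,f) ds` for all `t > 0`. -/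
def TailMaj (g f : ℝ → ℝ) : Prop :=
  ∀ t : ℝ, 0 < t →
    ∫⁻ s in Set.Ioi t, ENNReal.ofReal (mu g s) ≤
      ∫⁻ s in Set.Ioi t, ENNReal.ofReal (mu f s)

/-- The space `L_p(0,∞)`, `0 < p < ∞`. -/
def LpS (p : ℝ) : Set (ℝ → ℝ) :=
  {f | Measurable f ∧ ∫⁻ x, ENNReal.ofReal (|f x| ^ p) ∂m0 < ⊤}

/-- The `L_p`-norm. -/
def LpNorm (p : ℝ) (f : ℝ → ℝ) : ℝ :=
  ((∫⁻ x, ENNReal.ofReal (|f x| ^ p) ∂m0) ^ (1/p)).toReal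

/-- The space `L_∞(0,∞)`. -/
def LinftyS : Set (ℝ → ℝ) :=
  {f | Measurable f ∧ ∃ C : ℝ, ∀ᵐ x ∂m0, |f x| ≤ C}

/-- The `L_∞`-norm (essential supremum). -/
def LinftyNorm (f : ℝ → ℝ) : ℝ :=
  (essSup (fun x => ENNReal.ofReal |f x|) m0).toReal

/-- The space `L_0(0,∞)` of measurable functions with support of finite measure. -/
def L0S : Set (ℝ → ℝ) :=
  {f | Measurable f ∧ m0 (Function.support f) < ⊤}

/-- The group "norm" on `L_0` : `‖f‖_0 = m(supp f)`. -/
def L0Norm (f : ℝ → ℝ) : ℝ := (m0 (Function.support f)).toReal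

/-- The sum `X + Y` of two sets of functions. -/
def sumSet (X Y : Set (ℝ → ℝ)) : Set (ℝ → ℝ) :=
  {f | ∃ g ∈ X, ∃ h ∈ Y, f = g + h}

/-- A quasi-Banach function space on `(0,∞)` : a linear space of measurable functions,
equipped with a complete quasi-norm, such that `f ∈ E`, `g` measurable and `|g| ≤ |f|`
imply `g ∈ E` and `‖g‖_E ≤ ‖f‖_E`. -/
structure QBFS where
  carrier : Set (ℝ → ℝ)
  qnorm : (ℝ → ℝ) → ℝ
  measurable_mem : ∀ f ∈ carrier, Measurable f
  zero_mem : (0 : ℝ → ℝ) ∈ carrier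
  add_mem : ∀ f ∈ carrier, ∀ g ∈ carrier, f + g ∈ carrier
  smul_mem : ∀ (c : ℝ), ∀ f ∈ carrier, c • f ∈ carrier
  qnorm_nonneg : ∀ f, 0 ≤ qnorm f
  qnorm_eq_zero : ∀ f ∈ carrier, qnorm f = 0 → f = 0
  qnorm_smul : ∀ (c : ℝ) (f : ℝ → ℝ), qnorm (c • f) = |c| * qnorm f
  quasi_triangle : ∃ C : ℝ, 1 ≤ C ∧ ∀ f g, qnorm (f + g) ≤ C * (qnorm f + qnorm g)
  ideal : ∀ f ∈ carrier, ∀ g : ℝ → ℝ, Measurable g →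
    (∀ x, |g x| ≤ |f x|) → g ∈ carrier ∧ qnorm g ≤ qnorm f
  complete : ∀ u : ℕ → ℝ → ℝ, (∀ n, u n ∈ carrier) →
    (∀ ε : ℝ, 0 < ε → ∃ N : ℕ, ∀ j ≥ N, ∀ k ≥ N, qnorm (u j - u k) < ε) →
    ∃ f ∈ carrier, ∀ ε : ℝ, 0 < ε → ∃ N : ℕ, ∀ n ≥ N, qnorm (u n - f) < ε

/-- `T` is linear on the subspace `S`. -/
def IsLinearOn (T : (ℝ → ℝ) → (ℝ → ℝ)) (S : Set (ℝ → ℝ)) : Prop :=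
  (∀ f ∈ S, ∀ g ∈ S, T (f + g) = T f + T g) ∧
  (∀ (c : ℝ), ∀ f ∈ S, T (c • f) = c • T f)

/-- `T` maps `X` into `X` with bound `M` for the (quasi-)norm `N`. -/
def BoundedWith (T : (ℝ → ℝ) → (ℝ → ℝ)) (X : Set (ℝ → ℝ)) (N : (ℝ → ℝ) → ℝ) (M : ℝ) :
    Prop :=
  ∀ f ∈ X, T f ∈ X ∧ N (T f) ≤ M * N f

/-- `T` maps `X` into `X` boundedly for the (quasi-)norm `N`. -/
def BoundedOn (T : (ℝ → ℝ) → (ℝ → ℝ)) (X : Set (ℝ → ℝ)) (N : (ℝ → ℝ) → ℝ) : Prop :=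
  ∃ M : ℝ, 0 ≤ M ∧ BoundedWith T X N M

/-- `(E, NE)` is an interpolation space for the couple `((X,NX), (Y,NY))` :
`X ∩ Y ⊆ E ⊆ X + Y` and every linear operator on `X + Y` which is bounded from `X` to `X`
and from `Y` to `Y` maps `E` into `E` boundedly. -/
def IsInterpolation (X Y : Set (ℝ → ℝ)) (NX NY : (ℝ → ℝ) → ℝ)
    (E : Set (ℝ → ℝ)) (NE : (ℝ → ℝ) → ℝ) : Prop :=
  X ∩ Y ⊆ E ∧ E ⊆ sumSet X Y ∧
  ∀ T : (ℝ → ℝ) → (ℝ → ℝ),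
    IsLinearOn T (sumSet X Y) →
    (∀ f ∈ sumSet X Y, T f ∈ sumSet X Y) →
    BoundedOn T X NX → BoundedOn T Y NY →
    BoundedOn T E NE

end CSZ

namespace CSZProof
open CSZ MeasureTheory ENNReal Set

instance : SigmaFinite m0 := by unfold m0; infer_instance

/-- `I p f = ∫ |f|^p`. -/
def Ip (p : ℝ) (f : ℝ → ℝ) : ℝ≥0∞ := ∫⁻ x, ENNReal.ofReal (|f x| ^ p) ∂m0

lemma LpS_iff (p : ℝ) (f : ℝ → ℝ) : f ∈ LpS p ↔ Measurable f ∧ Ip p f < ⊤ := Iff.rfl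

lemma LpNorm_eq (p : ℝ) (f : ℝ → ℝ) : LpNorm p f = ((Ip p f) ^ (1/p)).toReal := rfl

lemma zero_mem_LpS {q : ℝ} (hq : 0 < q) : (0:ℝ→ℝ) ∈ LpS q := by
  refine ⟨measurable_const, ?_⟩
  have : ∀ x : ℝ, ENNReal.ofReal (|(0:ℝ→ℝ) x| ^ q) = 0 := by
    intro x
    simp [Real.zero_rpow (ne_of_gt hq)]
  simp only [this]
  simp

lemma zero_mem_L0S : (0:ℝ→ℝ) ∈ L0S := by
  refine ⟨measurable_const, ?_⟩
  simp [Function.support]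

lemma mem_sumSet_of_L0 {q : ℝ} (hq : 0 < q) {f : ℝ → ℝ} (h : f ∈ L0S) :
    f ∈ sumSet L0S (LpS q) := ⟨f, h, 0, zero_mem_LpS hq, by simp⟩

lemma mem_sumSet_of_Lp {q : ℝ} {f : ℝ → ℝ} (h : f ∈ LpS q) :
    f ∈ sumSet L0S (LpS q) := ⟨0, zero_mem_L0S, f, h, by simp⟩

lemma measurable_of_sumSet {q : ℝ} {f : ℝ → ℝ} (h : f ∈ sumSet L0S (LpS q)) :
    Measurable f := by
  obtain ⟨g, hg, h', hh', rfl⟩ := h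
  exact hg.1.add hh'.1


/-- the super-level set at height `lam` of `|f|^q`. -/
def Bset (q : ℝ) (f : ℝ → ℝ) (lam : ℝ) : Set ℝ := {x | lam < |f x| ^ q}

lemma measurable_absq {q : ℝ} {f : ℝ → ℝ} (hf : Measurable f) :
    Measurable fun x => |f x| ^ q := (hf.abs.pow measurable_const)

lemma measurableSet_Bset {q : ℝ} {f : ℝ → ℝ} (hf : Measurable f) (lam : ℝ) :
    MeasurableSet (Bset q f lam) :=
  measurableSet_lt measurable_const (measurable_absq hf)

/-- Chebyshev. -/
lemma cheb {p q : ℝ} (hp : 0 < p) (hq : 0 < q) {f : ℝ → ℝ} (hf : Measurable f)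
    {lam : ℝ} (hlam : 0 < lam) :
    ENNReal.ofReal (lam ^ (p/q)) * m0 (Bset q f lam) ≤ Ip p f := by
  have hmono : ∀ x ∈ Bset q f lam,
      ENNReal.ofReal (lam ^ (p/q)) ≤ ENNReal.ofReal (|f x| ^ p) := by
    intro x hx
    apply ENNReal.ofReal_le_ofReal
    have h1 : lam ^ (p/q) ≤ (|f x| ^ q) ^ (p/q) :=
      Real.rpow_le_rpow hlam.le (le_of_lt hx) (by positivity)
    calc lam ^ (p/q) ≤ (|f x| ^ q) ^ (p/q) := h1
      _ = |f x| ^ (q * (p/q)) := (Real.rpow_mul (abs_nonneg _) _ _).symm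
      _ = |f x| ^ p := by rw [mul_div_cancel₀ p (ne_of_gt hq)]
  calc ENNReal.ofReal (lam ^ (p/q)) * m0 (Bset q f lam)
      = ∫⁻ _ in Bset q f lam, ENNReal.ofReal (lam ^ (p/q)) ∂m0 := by
        rw [setLIntegral_const]
    _ ≤ ∫⁻ x in Bset q f lam, ENNReal.ofReal (|f x| ^ p) ∂m0 :=
        setLIntegral_mono ((hf.abs.pow measurable_const).ennreal_ofReal) hmono
    _ ≤ Ip p f := setLIntegral_le_lintegral _ _

lemma Bset_lt_top {p q : ℝ} (hp : 0 < p) (hq : 0 < q) {f : ℝ → ℝ} (hf : f ∈ LpS p)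
    {lam : ℝ} (hlam : 0 < lam) : m0 (Bset q f lam) < ⊤ := by
  by_contra h
  push_neg at h
  have h' : m0 (Bset q f lam) = ⊤ := top_le_iff.mp h
  have := cheb hp hq hf.1 hlam (f := f)
  rw [h', ENNReal.mul_top (by simp only [ne_eq, ENNReal.ofReal_eq_zero, not_le]; exact Real.rpow_pos_of_pos hlam (p/q))] at this
  exact absurd (lt_of_le_of_lt this hf.2) (lt_irrefl _)


def hd (q : ℝ) (f : ℝ → ℝ) (lam : ℝ) : ℝ → ℝ := fun x => if lam < |f x| ^ q then f x else 0
def tl (q : ℝ) (f : ℝ → ℝ) (lam : ℝ) : ℝ → ℝ := fun x => if lam < |f x| ^ q then 0 else f x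

lemma hd_add_tl (q : ℝ) (f : ℝ → ℝ) (lam : ℝ) : f = hd q f lam + tl q f lam := by
  funext x
  by_cases h : lam < |f x| ^ q <;> simp [hd, tl, h]

lemma measurable_hd {q : ℝ} {f : ℝ → ℝ} (hf : Measurable f) (lam : ℝ) :
    Measurable (hd q f lam) :=
  Measurable.ite (measurableSet_Bset hf lam) hf measurable_const

lemma measurable_tl {q : ℝ} {f : ℝ → ℝ} (hf : Measurable f) (lam : ℝ) :
    Measurable (tl q f lam) :=
  Measurable.ite (measurableSet_Bset hf lam) measurable_const hf

lemma support_hd_subset (q : ℝ) (f : ℝ → ℝ) (lam : ℝ) :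
    Function.support (hd q f lam) ⊆ Bset q f lam := by
  intro x hx
  by_contra h
  exact hx (if_neg h)

lemma hd_mem_L0S {p q : ℝ} (hp : 0 < p) (hq : 0 < q) {f : ℝ → ℝ} (hf : f ∈ LpS p)
    {lam : ℝ} (hlam : 0 < lam) : hd q f lam ∈ L0S :=
  ⟨measurable_hd hf.1 lam,
    lt_of_le_of_lt (measure_mono (support_hd_subset q f lam)) (Bset_lt_top hp hq hf hlam)⟩

lemma tl_sq_le {p q : ℝ} (hp : 0 < p) (hpq : p < q) {f : ℝ → ℝ}
    {lam : ℝ} (hlam : 0 < lam) (x : ℝ) :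
    |tl q f lam x| ^ q ≤ lam ^ (1 - p/q) * |f x| ^ p := by
  have hq : 0 < q := hp.trans hpq
  by_cases h : lam < |f x| ^ q
  · simp only [tl, h, if_true, abs_zero]
    rw [Real.zero_rpow (ne_of_gt hq)]
    positivity
  · simp only [tl, h, if_false]
    push_neg at h
    have hc : (0:ℝ) ≤ |f x| ^ q := Real.rpow_nonneg (abs_nonneg _) q
    have key : |f x| ^ q = (|f x| ^ q) ^ (1 - p/q) * (|f x| ^ q) ^ (p/q) := by
      rw [← Real.rpow_add' hc (by norm_num)]
      simp
    rw [key]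
    have h1 : (|f x| ^ q) ^ (1 - p/q) ≤ lam ^ (1 - p/q) := by
      apply Real.rpow_le_rpow hc h
      have : p/q < 1 := (div_lt_one hq).mpr hpq
      linarith
    have h2 : (|f x| ^ q) ^ (p/q) = |f x| ^ p := by
      rw [← Real.rpow_mul (abs_nonneg _), mul_div_cancel₀ p (ne_of_gt hq)]
    rw [h2]
    apply mul_le_mul_of_nonneg_right h1 (Real.rpow_nonneg (abs_nonneg _) p)

lemma Itl_eq {q : ℝ} (hq : 0 < q) {f : ℝ → ℝ} (hf : Measurable f) (lam : ℝ) :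
    ∫⁻ x, ENNReal.ofReal (|tl q f lam x| ^ q) ∂m0
      = ∫⁻ x in (Bset q f lam)ᶜ, ENNReal.ofReal (|f x| ^ q) ∂m0 := by
  rw [← lintegral_add_compl (fun x => ENNReal.ofReal (|tl q f lam x| ^ q))
      (measurableSet_Bset hf lam)]
  have h1 : ∫⁻ x in Bset q f lam, ENNReal.ofReal (|tl q f lam x| ^ q) ∂m0 = 0 := by
    have hz : ∀ᵐ x ∂m0, x ∈ Bset q f lam →
        ENNReal.ofReal (|tl q f lam x| ^ q) = (fun _ => (0:ℝ≥0∞)) x := by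
      apply ae_of_all
      intro x hx
      have hx' : lam < |f x| ^ q := hx
      simp only [tl, hx', if_true, abs_zero]
      rw [Real.zero_rpow (ne_of_gt hq)]
      simp
    rw [setLIntegral_congr_fun_ae (measurableSet_Bset hf lam) hz]
    simp
  have h2 : ∫⁻ x in (Bset q f lam)ᶜ, ENNReal.ofReal (|tl q f lam x| ^ q) ∂m0
      = ∫⁻ x in (Bset q f lam)ᶜ, ENNReal.ofReal (|f x| ^ q) ∂m0 := by
    apply setLIntegral_congr_fun_ae (measurableSet_Bset hf lam).compl
    apply ae_of_all
    intro x hx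
    have : ¬ (lam < |f x| ^ q) := hx
    simp only [tl, this, if_false]
  rw [h1, h2, zero_add]

lemma tl_mem_LpSq {p q : ℝ} (hp : 0 < p) (hpq : p < q) {f : ℝ → ℝ} (hf : f ∈ LpS p)
    {lam : ℝ} (hlam : 0 < lam) : tl q f lam ∈ LpS q := by
  refine ⟨measurable_tl hf.1 lam, ?_⟩
  have hb : ∀ x, ENNReal.ofReal (|tl q f lam x| ^ q)
      ≤ ENNReal.ofReal (lam ^ (1 - p/q)) * ENNReal.ofReal (|f x| ^ p) := by
    intro x
    rw [← ENNReal.ofReal_mul (Real.rpow_nonneg hlam.le _)]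
    exact ENNReal.ofReal_le_ofReal (tl_sq_le hp hpq hlam x)
  calc ∫⁻ x, ENNReal.ofReal (|tl q f lam x| ^ q) ∂m0
      ≤ ∫⁻ x, ENNReal.ofReal (lam ^ (1 - p/q)) * ENNReal.ofReal (|f x| ^ p) ∂m0 :=
        lintegral_mono hb
    _ = ENNReal.ofReal (lam ^ (1 - p/q)) * Ip p f :=
        lintegral_const_mul' _ _ ENNReal.ofReal_ne_top
    _ < ⊤ := ENNReal.mul_lt_top ENNReal.ofReal_lt_top hf.2

/-- truncated `q`-mass functional. -/
def Tr (q : ℝ) (g : ℝ → ℝ) (lam : ℝ) : ℝ≥0∞ :=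
  ∫⁻ x, ENNReal.ofReal (min (|g x| ^ q) lam) ∂m0

lemma Tr_eq {q : ℝ} {f : ℝ → ℝ} (hf : Measurable f) (lam : ℝ) :
    Tr q f lam = ENNReal.ofReal lam * m0 (Bset q f lam)
      + ∫⁻ x in (Bset q f lam)ᶜ, ENNReal.ofReal (|f x| ^ q) ∂m0 := by
  rw [Tr, ← lintegral_add_compl (fun x => ENNReal.ofReal (min (|f x| ^ q) lam))
      (measurableSet_Bset hf lam)]
  congr 1
  · rw [setLIntegral_congr_fun_ae (measurableSet_Bset hf lam)
      (ae_of_all _ (fun x hx => ?_)), setLIntegral_const]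
    show ENNReal.ofReal (min (|f x| ^ q) lam) = (fun _ => ENNReal.ofReal lam) x
    have : lam < |f x| ^ q := hx
    rw [min_eq_right this.le]
  · apply setLIntegral_congr_fun_ae (measurableSet_Bset hf lam).compl
    apply ae_of_all
    intro x hx
    have : ¬ (lam < |f x| ^ q) := hx
    push_neg at this
    rw [min_eq_left this]


lemma Tf_decomp {p q : ℝ} (hp : 0 < p) (hpq : p < q)
    {T : (ℝ → ℝ) → (ℝ → ℝ)} (hlin : IsLinearOn T (sumSet L0S (LpS q)))
    {f : ℝ → ℝ} (hf : f ∈ LpS p) {lam : ℝ} (hlam : 0 < lam) :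
    T f = T (hd q f lam) + T (tl q f lam) := by
  have hq : 0 < q := hp.trans hpq
  have h0 : hd q f lam ∈ sumSet L0S (LpS q) :=
    mem_sumSet_of_L0 hq (hd_mem_L0S hp hq hf hlam)
  have h1 : tl q f lam ∈ sumSet L0S (LpS q) :=
    mem_sumSet_of_Lp (tl_mem_LpSq hp hpq hf hlam)
  calc T f = T (hd q f lam + tl q f lam) := by rw [← hd_add_tl]
    _ = T (hd q f lam) + T (tl q f lam) := hlin.1 _ h0 _ h1

lemma core {p q : ℝ} (hp : 0 < p) (hpq : p < q)
    {T : (ℝ → ℝ) → (ℝ → ℝ)} {M0 Mq : ℝ} (hM0 : 0 ≤ M0) (hMq : 0 ≤ Mq)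
    (hlin : IsLinearOn T (sumSet L0S (LpS q)))
    (hb0 : BoundedWith T L0S L0Norm M0)
    (hbq : BoundedWith T (LpS q) (LpNorm q) Mq)
    {f : ℝ → ℝ} (hf : f ∈ LpS p) :
    Measurable (T f) ∧ ∀ lam : ℝ, 0 < lam →
      Tr q (T f) lam ≤ ENNReal.ofReal M0 * (ENNReal.ofReal lam * m0 (Bset q f lam))
        + ENNReal.ofReal (Mq ^ q) * ∫⁻ x in (Bset q f lam)ᶜ, ENNReal.ofReal (|f x| ^ q) ∂m0 := by
  have hq : 0 < q := hp.trans hpq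
  have key : ∀ lam : ℝ, 0 < lam →
      Tr q (T f) lam ≤ ENNReal.ofReal M0 * (ENNReal.ofReal lam * m0 (Bset q f lam))
        + ENNReal.ofReal (Mq ^ q) * ∫⁻ x in (Bset q f lam)ᶜ, ENNReal.ofReal (|f x| ^ q) ∂m0 := by
    intro lam hlam
    obtain ⟨hTh, hThn⟩ := hb0 _ (hd_mem_L0S hp hq hf hlam)
    obtain ⟨hTg, hTgn⟩ := hbq _ (tl_mem_LpSq hp hpq hf hlam)
    set S : Set ℝ := Function.support (T (hd q f lam)) with hSdef
    have hS : MeasurableSet S := measurableSet_support hTh.1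
    have hSfin : m0 S ≠ ⊤ := hTh.2.ne
    have hsuppfin : m0 (Function.support (hd q f lam)) ≠ ⊤ :=
      (lt_of_le_of_lt (measure_mono (support_hd_subset q f lam))
        (Bset_lt_top hp hq hf hlam)).ne
    -- support bound
    have hSle : m0 S ≤ ENNReal.ofReal M0 * m0 (Bset q f lam) := by
      calc m0 S = ENNReal.ofReal ((m0 S).toReal) := (ENNReal.ofReal_toReal hSfin).symm
        _ ≤ ENNReal.ofReal (M0 * (m0 (Function.support (hd q f lam))).toReal) :=
            ENNReal.ofReal_le_ofReal hThn
        _ = ENNReal.ofReal M0 * ENNReal.ofReal ((m0 (Function.support (hd q f lam))).toReal) :=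
            ENNReal.ofReal_mul hM0
        _ = ENNReal.ofReal M0 * m0 (Function.support (hd q f lam)) := by
            rw [ENNReal.ofReal_toReal hsuppfin]
        _ ≤ ENNReal.ofReal M0 * m0 (Bset q f lam) :=
            mul_le_mul_right (measure_mono (support_hd_subset q f lam)) _
    -- q-norm bound
    set A : ℝ≥0∞ := ∫⁻ x, ENNReal.ofReal (|T (tl q f lam) x| ^ q) ∂m0 with hAdef
    set Bi : ℝ≥0∞ := ∫⁻ x, ENNReal.ofReal (|tl q f lam x| ^ q) ∂m0 with hBidef
    have hAfin : A ≠ ⊤ := hTg.2.ne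
    have hBifin : Bi ≠ ⊤ := (tl_mem_LpSq hp hpq hf hlam).2.ne
    have hA : A ≤ ENNReal.ofReal (Mq ^ q) * Bi := by
      have h2 : A ^ (1/q) ≤ ENNReal.ofReal Mq * Bi ^ (1/q) := by
        have ha : A ^ (1/q) ≠ ⊤ := ENNReal.rpow_ne_top_of_nonneg (by positivity) hAfin
        have hb : Bi ^ (1/q) ≠ ⊤ := ENNReal.rpow_ne_top_of_nonneg (by positivity) hBifin
        calc A ^ (1/q) = ENNReal.ofReal ((A ^ (1/q)).toReal) := (ENNReal.ofReal_toReal ha).symm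
          _ ≤ ENNReal.ofReal (Mq * ((Bi ^ (1/q)).toReal)) := ENNReal.ofReal_le_ofReal hTgn
          _ = ENNReal.ofReal Mq * ENNReal.ofReal ((Bi ^ (1/q)).toReal) := ENNReal.ofReal_mul hMq
          _ = ENNReal.ofReal Mq * Bi ^ (1/q) := by rw [ENNReal.ofReal_toReal hb]
      calc A = (A ^ (1/q)) ^ q := by
            rw [← ENNReal.rpow_mul, one_div_mul_cancel (ne_of_gt hq), ENNReal.rpow_one]
        _ ≤ (ENNReal.ofReal Mq * Bi ^ (1/q)) ^ q := ENNReal.rpow_le_rpow h2 hq.le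
        _ = (ENNReal.ofReal Mq) ^ q * (Bi ^ (1/q)) ^ q :=
            ENNReal.mul_rpow_of_nonneg _ _ hq.le
        _ = ENNReal.ofReal (Mq ^ q) * Bi := by
            rw [ENNReal.ofReal_rpow_of_nonneg hMq hq.le, ← ENNReal.rpow_mul,
              one_div_mul_cancel (ne_of_gt hq), ENNReal.rpow_one]
    -- split the integral
    have hTfx : ∀ x, x ∈ Sᶜ → T f x = T (tl q f lam) x := by
      intro x hx
      have h0 : T (hd q f lam) x = 0 := Function.notMem_support.mp hx
      have := congrFun (Tf_decomp hp hpq hlin hf hlam) x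
      rw [this, Pi.add_apply, h0, zero_add]
    have hsplit : Tr q (T f) lam ≤ ENNReal.ofReal lam * m0 S + A := by
      rw [Tr, ← lintegral_add_compl (fun x => ENNReal.ofReal (min (|T f x| ^ q) lam)) hS]
      apply add_le_add
      · calc ∫⁻ x in S, ENNReal.ofReal (min (|T f x| ^ q) lam) ∂m0
            ≤ ∫⁻ _ in S, ENNReal.ofReal lam ∂m0 :=
              setLIntegral_mono measurable_const
                (fun x _ => ENNReal.ofReal_le_ofReal (min_le_right _ _))
          _ = ENNReal.ofReal lam * m0 S := setLIntegral_const _ _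
      · calc ∫⁻ x in Sᶜ, ENNReal.ofReal (min (|T f x| ^ q) lam) ∂m0
            ≤ ∫⁻ x in Sᶜ, ENNReal.ofReal (|T (tl q f lam) x| ^ q) ∂m0 := by
              apply setLIntegral_mono ((hTg.1.abs.pow measurable_const).ennreal_ofReal)
              intro x hx
              rw [← hTfx x hx]
              exact ENNReal.ofReal_le_ofReal (min_le_left _ _)
          _ ≤ A := setLIntegral_le_lintegral _ _
    -- combine
    have hBiRf : Bi = ∫⁻ x in (Bset q f lam)ᶜ, ENNReal.ofReal (|f x| ^ q) ∂m0 :=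
      Itl_eq hq hf.1 lam
    calc Tr q (T f) lam ≤ ENNReal.ofReal lam * m0 S + A := hsplit
      _ ≤ ENNReal.ofReal lam * (ENNReal.ofReal M0 * m0 (Bset q f lam))
            + ENNReal.ofReal (Mq ^ q) * Bi :=
          add_le_add (mul_le_mul_right hSle _) hA
      _ = ENNReal.ofReal M0 * (ENNReal.ofReal lam * m0 (Bset q f lam))
            + ENNReal.ofReal (Mq ^ q) * Bi := by ring_nf
      _ = ENNReal.ofReal M0 * (ENNReal.ofReal lam * m0 (Bset q f lam))
            + ENNReal.ofReal (Mq ^ q)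
              * ∫⁻ x in (Bset q f lam)ᶜ, ENNReal.ofReal (|f x| ^ q) ∂m0 := by rw [hBiRf]
  refine ⟨?_, key⟩
  have h1 : (0:ℝ) < 1 := one_pos
  obtain ⟨hTh, _⟩ := hb0 _ (hd_mem_L0S hp hq hf h1)
  obtain ⟨hTg, _⟩ := hbq _ (tl_mem_LpSq hp hpq hf h1)
  rw [Tf_decomp hp hpq hlin hf h1]
  exact hTh.1.add hTg.1


def c0 (θ : ℝ) : ℝ≥0∞ :=
  ∫⁻ lam in Ioi (0:ℝ), ENNReal.ofReal (min 1 lam) * ENNReal.ofReal (lam ^ (θ - 2))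

lemma meas_c0int (θ : ℝ) :
    Measurable fun lam : ℝ => ENNReal.ofReal (min 1 lam) * ENNReal.ofReal (lam ^ (θ - 2)) :=
  ((measurable_const.min measurable_id).ennreal_ofReal).mul
    ((measurable_id.pow measurable_const).ennreal_ofReal)

lemma c0_pos {θ : ℝ} (hθ1 : θ < 1) : 0 < c0 θ := by
  have hsub : (Ioo (1/2 : ℝ) 1) ⊆ Ioi 0 := fun x hx => lt_trans (by norm_num) hx.1
  have h1 : ∫⁻ lam in Ioo (1/2:ℝ) 1, ENNReal.ofReal (1/2) ≤ c0 θ := by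
    refine le_trans ?_ (lintegral_mono' (Measure.restrict_mono hsub le_rfl) le_rfl)
    apply setLIntegral_mono (meas_c0int θ)
    intro x hx
    have hx0 : (0:ℝ) < x := lt_trans (by norm_num) hx.1
    have hmin : ENNReal.ofReal (1/2) ≤ ENNReal.ofReal (min 1 x) :=
      ENNReal.ofReal_le_ofReal (le_min (by norm_num) (le_of_lt hx.1))
    have hw : (1:ℝ≥0∞) ≤ ENNReal.ofReal (x ^ (θ - 2)) := by
      rw [show (1:ℝ≥0∞) = ENNReal.ofReal 1 by simp]
      apply ENNReal.ofReal_le_ofReal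
      apply Real.one_le_rpow_of_pos_of_le_one_of_nonpos hx0 hx.2.le (by linarith)
    calc ENNReal.ofReal (1/2) = ENNReal.ofReal (1/2) * 1 := (mul_one _).symm
      _ ≤ ENNReal.ofReal (min 1 x) * ENNReal.ofReal (x ^ (θ - 2)) := mul_le_mul' hmin hw
  refine lt_of_lt_of_le ?_ h1
  rw [setLIntegral_const]
  simp only [Real.volume_Ioo]
  rw [ENNReal.mul_pos_iff]
  constructor
  · simp
  · simp [ENNReal.ofReal_pos]; norm_num

lemma c0_ne_top {θ : ℝ} (hθ0 : 0 < θ) (hθ1 : θ < 1) : c0 θ ≠ ⊤ := by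
  have hunion : Ioi (0:ℝ) = Ioc (0:ℝ) 1 ∪ Ioi 1 := (Ioc_union_Ioi_eq_Ioi zero_le_one).symm
  have hdisj : Disjoint (Ioc (0:ℝ) 1) (Ioi 1) := by
    rw [Set.disjoint_left]
    intro x hx hx'
    exact absurd hx.2 (not_le.mpr hx')
  have hsplit : c0 θ = (∫⁻ lam in Ioc (0:ℝ) 1,
        ENNReal.ofReal (min 1 lam) * ENNReal.ofReal (lam ^ (θ - 2)))
      + ∫⁻ lam in Ioi (1:ℝ),
        ENNReal.ofReal (min 1 lam) * ENNReal.ofReal (lam ^ (θ - 2)) := by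
    rw [c0, hunion, lintegral_union measurableSet_Ioi hdisj]
  rw [hsplit]
  have hfin1 : (∫⁻ lam in Ioc (0:ℝ) 1,
      ENNReal.ofReal (min 1 lam) * ENNReal.ofReal (lam ^ (θ - 2))) ≠ ⊤ := by
    have hle : ∀ lam ∈ Ioc (0:ℝ) 1,
        ENNReal.ofReal (min 1 lam) * ENNReal.ofReal (lam ^ (θ - 2))
          ≤ ENNReal.ofReal (lam ^ (θ - 1)) := by
      intro lam hlam
      rw [min_eq_right hlam.2, ← ENNReal.ofReal_mul hlam.1.le]
      apply ENNReal.ofReal_le_ofReal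
      rw [show lam * lam ^ (θ-2) = lam ^ (1:ℝ) * lam ^ (θ-2) by rw [Real.rpow_one],
        ← Real.rpow_add hlam.1]
      rw [show (1:ℝ) + (θ - 2) = θ - 1 by ring]
    have hint : IntegrableOn (fun lam : ℝ => lam ^ (θ - 1)) (Ioc (0:ℝ) 1) := by
      have := intervalIntegral.intervalIntegrable_rpow' (a := 0) (b := 1)
        (r := θ - 1) (by linarith)
      rwa [intervalIntegrable_iff_integrableOn_Ioc_of_le zero_le_one] at this
    have hfin := hint.lintegral_lt_top
    exact (lt_of_le_of_lt (setLIntegral_mono (measurable_id.pow measurable_const).ennreal_ofReal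
      hle) hfin).ne
  have hfin2 : (∫⁻ lam in Ioi (1:ℝ),
      ENNReal.ofReal (min 1 lam) * ENNReal.ofReal (lam ^ (θ - 2))) ≠ ⊤ := by
    have hle : ∀ lam ∈ Ioi (1:ℝ),
        ENNReal.ofReal (min 1 lam) * ENNReal.ofReal (lam ^ (θ - 2))
          ≤ ENNReal.ofReal (lam ^ (θ - 2)) := by
      intro lam hlam
      rw [min_eq_left (le_of_lt hlam)]
      simp
    have hint : IntegrableOn (fun lam : ℝ => lam ^ (θ - 2)) (Ioi (1:ℝ)) :=
      integrableOn_Ioi_rpow_of_lt (by linarith) one_pos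
    have hfin := hint.lintegral_lt_top
    exact (lt_of_le_of_lt (setLIntegral_mono (measurable_id.pow measurable_const).ennreal_ofReal
      hle) hfin).ne
  exact ENNReal.add_ne_top.mpr ⟨hfin1, hfin2⟩

lemma scalar_id {θ : ℝ} {a : ℝ} (ha : 0 < a) :
    ∫⁻ lam in Ioi (0:ℝ), ENNReal.ofReal (min a lam) * ENNReal.ofReal (lam ^ (θ - 2))
      = ENNReal.ofReal (a ^ θ) * c0 θ := by
  set F : ℝ → ℝ≥0∞ := fun lam => ENNReal.ofReal (min a lam) * ENNReal.ofReal (lam ^ (θ - 2))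
    with hFdef
  have hFm : Measurable F :=
    ((measurable_const.min measurable_id).ennreal_ofReal).mul
      ((measurable_id.pow measurable_const).ennreal_ofReal)
  have hind : Measurable ((Ioi (0:ℝ)).indicator F) := hFm.indicator measurableSet_Ioi
  have hmap : ∫⁻ x, (Ioi (0:ℝ)).indicator F (a * x)
      = ENNReal.ofReal |a⁻¹| * ∫⁻ y, (Ioi (0:ℝ)).indicator F y := by
    rw [← lintegral_map hind (measurable_const_mul a), Real.map_volume_mul_left (ne_of_gt ha),
      lintegral_smul_measure, smul_eq_mul]
  have hkey : ∫⁻ y, (Ioi (0:ℝ)).indicator F y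
      = ENNReal.ofReal a * ∫⁻ x, (Ioi (0:ℝ)).indicator F (a * x) := by
    rw [hmap, ← mul_assoc, ← ENNReal.ofReal_mul ha.le]
    rw [abs_of_pos (inv_pos.mpr ha), mul_inv_cancel₀ (ne_of_gt ha)]
    simp
  have hcomp : (fun x => (Ioi (0:ℝ)).indicator F (a * x))
      = (Ioi (0:ℝ)).indicator (fun x => F (a * x)) := by
    funext x
    by_cases hx : 0 < x
    · rw [Set.indicator_of_mem (Set.mem_Ioi.mpr (mul_pos ha hx)) F,
        Set.indicator_of_mem (Set.mem_Ioi.mpr hx)]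
    · push_neg at hx
      have hax : (a * x) ∉ Ioi (0:ℝ) := by
        simp only [Set.mem_Ioi, not_lt]
        exact mul_nonpos_of_nonneg_of_nonpos ha.le hx
      rw [Set.indicator_of_notMem hax F,
        Set.indicator_of_notMem (by simp only [Set.mem_Ioi, not_lt]; exact hx)]
  have hFval : ∀ x ∈ Ioi (0:ℝ), F (a * x)
      = (ENNReal.ofReal a * ENNReal.ofReal (a ^ (θ - 2)))
        * (ENNReal.ofReal (min 1 x) * ENNReal.ofReal (x ^ (θ - 2))) := by
    intro x hx
    have hx0 : (0:ℝ) < x := hx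
    have hmin : min a (a * x) = a * min 1 x := by
      rw [mul_min_of_nonneg _ _ ha.le, mul_one]
    have hpow : (a * x) ^ (θ - 2) = a ^ (θ - 2) * x ^ (θ - 2) :=
      Real.mul_rpow ha.le hx0.le
    rw [hFdef]
    simp only
    rw [hmin, hpow, ENNReal.ofReal_mul ha.le, ENNReal.ofReal_mul (Real.rpow_nonneg ha.le _)]
    ring
  have hIoi : ∫⁻ x in Ioi (0:ℝ), F (a * x)
      = (ENNReal.ofReal a * ENNReal.ofReal (a ^ (θ - 2))) * c0 θ := by
    rw [setLIntegral_congr_fun_ae measurableSet_Ioi (ae_of_all _ hFval)]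
    rw [c0]
    exact lintegral_const_mul' _ _ (by
      exact ENNReal.mul_ne_top ENNReal.ofReal_ne_top ENNReal.ofReal_ne_top)
  calc ∫⁻ lam in Ioi (0:ℝ), F lam = ∫⁻ y, (Ioi (0:ℝ)).indicator F y :=
        (lintegral_indicator measurableSet_Ioi F).symm
    _ = ENNReal.ofReal a * ∫⁻ x, (Ioi (0:ℝ)).indicator F (a * x) := hkey
    _ = ENNReal.ofReal a * ∫⁻ x in Ioi (0:ℝ), F (a * x) := by
        rw [hcomp, lintegral_indicator measurableSet_Ioi]
    _ = ENNReal.ofReal a * ((ENNReal.ofReal a * ENNReal.ofReal (a ^ (θ - 2))) * c0 θ) := by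
        rw [hIoi]
    _ = ENNReal.ofReal (a ^ θ) * c0 θ := by
        rw [← mul_assoc, ← mul_assoc, ← ENNReal.ofReal_mul ha.le,
          ← ENNReal.ofReal_mul (by positivity)]
        congr 2
        rw [show θ = 1 + (1 + (θ - 2)) by ring, Real.rpow_add ha, Real.rpow_add ha,
          Real.rpow_one]
        ring_nf

lemma scalar_full {p q : ℝ} (hp : 0 < p) (hpq : p < q) {y : ℝ} (hy : 0 ≤ y) :
    ∫⁻ lam in Ioi (0:ℝ),
        ENNReal.ofReal (min (y ^ q) lam) * ENNReal.ofReal (lam ^ (p/q - 2))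
      = c0 (p/q) * ENNReal.ofReal (y ^ p) := by
  have hq : 0 < q := hp.trans hpq
  rcases eq_or_lt_of_le hy with h0 | h0
  · have hyq : y ^ q = 0 := by rw [← h0, Real.zero_rpow (ne_of_gt hq)]
    have hyp : y ^ p = 0 := by rw [← h0, Real.zero_rpow (ne_of_gt hp)]
    rw [hyq, hyp]
    have hzero : ∀ lam ∈ Ioi (0:ℝ),
        ENNReal.ofReal (min 0 lam) * ENNReal.ofReal (lam ^ (p/q - 2)) = (fun _ => (0:ℝ≥0∞)) lam := by
      intro lam hlam
      have : min (0:ℝ) lam = 0 := min_eq_left (le_of_lt hlam)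
      rw [this]
      simp
    rw [setLIntegral_congr_fun_ae measurableSet_Ioi (ae_of_all _ hzero)]
    simp
  · have hyq : 0 < y ^ q := Real.rpow_pos_of_pos h0 q
    rw [scalar_id hyq]
    rw [← Real.rpow_mul (le_of_lt h0), mul_comm]
    congr 3
    field_simp


lemma J_eq {p q : ℝ} (hp : 0 < p) (hpq : p < q) {g : ℝ → ℝ} (hg : Measurable g) :
    ∫⁻ lam in Ioi (0:ℝ), Tr q g lam * ENNReal.ofReal (lam ^ (p/q - 2))
      = c0 (p/q) * Ip p g := by
  have hq : 0 < q := hp.trans hpq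
  have hθ0 : 0 < p/q := div_pos hp hq
  have hθ1 : p/q < 1 := (div_lt_one hq).mpr hpq
  have step1 : ∀ lam : ℝ, Tr q g lam * ENNReal.ofReal (lam ^ (p/q - 2))
      = ∫⁻ x, ENNReal.ofReal (min (|g x| ^ q) lam) * ENNReal.ofReal (lam ^ (p/q - 2)) ∂m0 := by
    intro lam
    exact (lintegral_mul_const _
      (((hg.abs.pow measurable_const).min measurable_const).ennreal_ofReal)).symm
  calc ∫⁻ lam in Ioi (0:ℝ), Tr q g lam * ENNReal.ofReal (lam ^ (p/q - 2))
      = ∫⁻ lam in Ioi (0:ℝ), ∫⁻ x,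
          ENNReal.ofReal (min (|g x| ^ q) lam) * ENNReal.ofReal (lam ^ (p/q - 2)) ∂m0 :=
        lintegral_congr step1
    _ = ∫⁻ x, (∫⁻ lam in Ioi (0:ℝ),
          ENNReal.ofReal (min (|g x| ^ q) lam) * ENNReal.ofReal (lam ^ (p/q - 2))) ∂m0 := by
        apply lintegral_lintegral_swap
        apply Measurable.aemeasurable
        refine Measurable.mul (f := fun z : ℝ × ℝ => ENNReal.ofReal (min (|g z.2| ^ q) z.1))
          (g := fun z : ℝ × ℝ => ENNReal.ofReal (z.1 ^ (p/q - 2))) ?_ ?_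
        · exact (((hg.abs.pow measurable_const).comp measurable_snd).min
            measurable_fst).ennreal_ofReal
        · exact (measurable_fst.pow measurable_const).ennreal_ofReal
    _ = ∫⁻ x, c0 (p/q) * ENNReal.ofReal (|g x| ^ p) ∂m0 :=
        lintegral_congr fun x => scalar_full hp hpq (abs_nonneg (g x))
    _ = c0 (p/q) * Ip p g := lintegral_const_mul' _ _ (c0_ne_top hθ0 hθ1)

lemma Ip_le {p q : ℝ} (hp : 0 < p) (hpq : p < q) {u f : ℝ → ℝ} (hu : Measurable u)
    (hf : Measurable f) {C : ℝ≥0∞} (hCt : C ≠ ⊤)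
    (hc : ∀ lam : ℝ, 0 < lam → Tr q u lam ≤ C * Tr q f lam) :
    Ip p u ≤ C * Ip p f := by
  have hq : 0 < q := hp.trans hpq
  have hθ0 : 0 < p/q := div_pos hp hq
  have hθ1 : p/q < 1 := (div_lt_one hq).mpr hpq
  have h1 : c0 (p/q) * Ip p u ≤ c0 (p/q) * (C * Ip p f) := by
    rw [← J_eq hp hpq hu]
    have h2 : ∫⁻ lam in Ioi (0:ℝ), Tr q u lam * ENNReal.ofReal (lam ^ (p/q - 2))
        ≤ ∫⁻ lam in Ioi (0:ℝ), C * (Tr q f lam * ENNReal.ofReal (lam ^ (p/q - 2))) := by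
      apply lintegral_mono_ae
      filter_upwards [ae_restrict_mem measurableSet_Ioi] with lam hlam
      calc Tr q u lam * ENNReal.ofReal (lam ^ (p/q - 2))
          ≤ (C * Tr q f lam) * ENNReal.ofReal (lam ^ (p/q - 2)) :=
            mul_le_mul_left (hc lam hlam) _
        _ = C * (Tr q f lam * ENNReal.ofReal (lam ^ (p/q - 2))) := by ring
    calc ∫⁻ lam in Ioi (0:ℝ), Tr q u lam * ENNReal.ofReal (lam ^ (p/q - 2))
        ≤ ∫⁻ lam in Ioi (0:ℝ), C * (Tr q f lam * ENNReal.ofReal (lam ^ (p/q - 2))) := h2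
      _ = C * ∫⁻ lam in Ioi (0:ℝ), Tr q f lam * ENNReal.ofReal (lam ^ (p/q - 2)) :=
          lintegral_const_mul' _ _ hCt
      _ = C * (c0 (p/q) * Ip p f) := by rw [J_eq hp hpq hf]
      _ = c0 (p/q) * (C * Ip p f) := by ring
  exact (ENNReal.mul_le_mul_iff_right (ne_of_gt (c0_pos hθ1)) (c0_ne_top hθ0 hθ1)).mp h1


/-- The two auxiliary corollaries of `core`. -/
lemma Tr_bound_general {p q : ℝ} (hp : 0 < p) (hpq : p < q)
    {T : (ℝ → ℝ) → (ℝ → ℝ)} {M0 Mq : ℝ} (hM0 : 0 ≤ M0) (hMq : 0 ≤ Mq)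
    (hlin : IsLinearOn T (sumSet L0S (LpS q)))
    (hb0 : BoundedWith T L0S L0Norm M0)
    (hbq : BoundedWith T (LpS q) (LpNorm q) Mq)
    {f : ℝ → ℝ} (hf : f ∈ LpS p) :
    Measurable (T f) ∧ ∀ lam : ℝ, 0 < lam →
      Tr q (T f) lam ≤ (ENNReal.ofReal M0 + ENNReal.ofReal (Mq ^ q)) * Tr q f lam := by
  obtain ⟨hmeas, hb⟩ := core hp hpq hM0 hMq hlin hb0 hbq hf
  refine ⟨hmeas, fun lam hlam => ?_⟩
  have h1 : ENNReal.ofReal lam * m0 (Bset q f lam) ≤ Tr q f lam := by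
    rw [Tr_eq hf.1 lam]; exact le_add_right le_rfl
  have h2 : (∫⁻ x in (Bset q f lam)ᶜ, ENNReal.ofReal (|f x| ^ q) ∂m0) ≤ Tr q f lam := by
    rw [Tr_eq hf.1 lam]; exact le_add_left le_rfl
  calc Tr q (T f) lam
      ≤ ENNReal.ofReal M0 * (ENNReal.ofReal lam * m0 (Bset q f lam))
        + ENNReal.ofReal (Mq ^ q) * ∫⁻ x in (Bset q f lam)ᶜ, ENNReal.ofReal (|f x| ^ q) ∂m0 :=
        hb lam hlam
    _ ≤ ENNReal.ofReal M0 * Tr q f lam + ENNReal.ofReal (Mq ^ q) * Tr q f lam :=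
        add_le_add (mul_le_mul_right h1 _) (mul_le_mul_right h2 _)
    _ = (ENNReal.ofReal M0 + ENNReal.ofReal (Mq ^ q)) * Tr q f lam := (add_mul _ _ _).symm

lemma Tr_bound_sharp {p q : ℝ} (hp : 0 < p) (hpq : p < q)
    {T : (ℝ → ℝ) → (ℝ → ℝ)}
    (hlin : IsLinearOn T (sumSet L0S (LpS q)))
    (hb0 : BoundedWith T L0S L0Norm 1)
    (hbq : BoundedWith T (LpS q) (LpNorm q) 1)
    {f : ℝ → ℝ} (hf : f ∈ LpS p) :
    Measurable (T f) ∧ ∀ lam : ℝ, 0 < lam → Tr q (T f) lam ≤ Tr q f lam := by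
  obtain ⟨hmeas, hb⟩ := core hp hpq zero_le_one zero_le_one hlin hb0 hbq hf
  refine ⟨hmeas, fun lam hlam => ?_⟩
  have h := hb lam hlam
  rw [Real.one_rpow, ENNReal.ofReal_one, one_mul, one_mul] at h
  rw [Tr_eq hf.1 lam]
  exact h

/-- General quantitative form of the interpolation bound. -/
lemma main_general {p q : ℝ} (hp : 0 < p) (hpq : p < q)
    {T : (ℝ → ℝ) → (ℝ → ℝ)} {M0 Mq : ℝ} (hM0 : 0 ≤ M0) (hMq : 0 ≤ Mq)
    (hlin : IsLinearOn T (sumSet L0S (LpS q)))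
    (hb0 : BoundedWith T L0S L0Norm M0)
    (hbq : BoundedWith T (LpS q) (LpNorm q) Mq) :
    BoundedWith T (LpS p) (LpNorm p) ((M0 + Mq ^ q) ^ (1/p)) := by
  intro f hf
  have hq : 0 < q := hp.trans hpq
  obtain ⟨hmeas, hTr⟩ := Tr_bound_general hp hpq hM0 hMq hlin hb0 hbq hf
  have hMqq : (0:ℝ) ≤ Mq ^ q := Real.rpow_nonneg hMq q
  have hsum : (0:ℝ) ≤ M0 + Mq ^ q := add_nonneg hM0 hMqq
  set C : ℝ≥0∞ := ENNReal.ofReal M0 + ENNReal.ofReal (Mq ^ q) with hCdef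
  have hC : C = ENNReal.ofReal (M0 + Mq ^ q) := (ENNReal.ofReal_add hM0 hMqq).symm
  have hCt : C ≠ ⊤ := by rw [hC]; exact ENNReal.ofReal_ne_top
  have hIle : Ip p (T f) ≤ C * Ip p f := Ip_le hp hpq hmeas hf.1 hCt hTr
  have hmem : T f ∈ LpS p := by
    refine ⟨hmeas, lt_of_le_of_lt hIle ?_⟩
    exact ENNReal.mul_lt_top (hC ▸ ENNReal.ofReal_lt_top) hf.2
  refine ⟨hmem, ?_⟩
  have h3 : (Ip p (T f)) ^ (1/p) ≤ C ^ (1/p) * (Ip p f) ^ (1/p) := by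
    calc (Ip p (T f)) ^ (1/p) ≤ (C * Ip p f) ^ (1/p) :=
          ENNReal.rpow_le_rpow hIle (by positivity)
      _ = C ^ (1/p) * (Ip p f) ^ (1/p) := ENNReal.mul_rpow_of_nonneg _ _ (by positivity)
  have hfin : C ^ (1/p) * (Ip p f) ^ (1/p) ≠ ⊤ :=
    ENNReal.mul_ne_top (ENNReal.rpow_ne_top_of_nonneg (by positivity) hCt)
      (ENNReal.rpow_ne_top_of_nonneg (by positivity) hf.2.ne)
  calc LpNorm p (T f) = ((Ip p (T f)) ^ (1/p)).toReal := rfl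
    _ ≤ (C ^ (1/p) * (Ip p f) ^ (1/p)).toReal := ENNReal.toReal_mono hfin h3
    _ = (C ^ (1/p)).toReal * ((Ip p f) ^ (1/p)).toReal := ENNReal.toReal_mul
    _ = (M0 + Mq ^ q) ^ (1/p) * LpNorm p f := by
        rw [hC, ENNReal.ofReal_rpow_of_nonneg hsum (by positivity),
          ENNReal.toReal_ofReal (Real.rpow_nonneg hsum _)]
        rfl

/-- Sharp (norm-one) form. -/
lemma main_sharp {p q : ℝ} (hp : 0 < p) (hpq : p < q)
    {T : (ℝ → ℝ) → (ℝ → ℝ)}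
    (hlin : IsLinearOn T (sumSet L0S (LpS q)))
    (hb0 : BoundedWith T L0S L0Norm 1)
    (hbq : BoundedWith T (LpS q) (LpNorm q) 1) :
    BoundedWith T (LpS p) (LpNorm p) 1 := by
  intro f hf
  obtain ⟨hmeas, hTr⟩ := Tr_bound_sharp hp hpq hlin hb0 hbq hf
  have hTr' : ∀ lam : ℝ, 0 < lam → Tr q (T f) lam ≤ (1:ℝ≥0∞) * Tr q f lam := by
    intro lam hlam
    rw [one_mul]
    exact hTr lam hlam
  have hIle : Ip p (T f) ≤ 1 * Ip p f := Ip_le hp hpq hmeas hf.1 one_ne_top hTr'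
  rw [one_mul] at hIle
  have hmem : T f ∈ LpS p := ⟨hmeas, lt_of_le_of_lt hIle hf.2⟩
  refine ⟨hmem, ?_⟩
  rw [one_mul]
  have h3 : (Ip p (T f)) ^ (1/p) ≤ (Ip p f) ^ (1/p) :=
    ENNReal.rpow_le_rpow hIle (by positivity)
  have hfin : (Ip p f) ^ (1/p) ≠ ⊤ :=
    ENNReal.rpow_ne_top_of_nonneg (by positivity) hf.2.ne
  exact ENNReal.toReal_mono hfin h3

/-- `L0 ∩ Lq ⊆ Lp`. -/
lemma incl_inter {p q : ℝ} (hp : 0 < p) (hpq : p < q) :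
    L0S ∩ LpS q ⊆ LpS p := by
  intro f hf
  obtain ⟨⟨hm, hsupp⟩, ⟨_, hint⟩⟩ := hf
  refine ⟨hm, ?_⟩
  have hpt : ∀ x, ENNReal.ofReal (|f x| ^ p)
      ≤ (Function.support f).indicator (fun _ => (1:ℝ≥0∞)) x + ENNReal.ofReal (|f x| ^ q) := by
    intro x
    by_cases h0 : f x = 0
    · simp [h0, Real.zero_rpow (ne_of_gt hp)]
    · by_cases h1 : |f x| ≤ 1
      · have hle1 : ENNReal.ofReal (|f x| ^ p) ≤ 1 := by
          rw [show (1:ℝ≥0∞) = ENNReal.ofReal 1 by simp]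
          exact ENNReal.ofReal_le_ofReal (Real.rpow_le_one (abs_nonneg _) h1 hp.le)
        calc ENNReal.ofReal (|f x| ^ p) ≤ 1 := hle1
          _ = (Function.support f).indicator (fun _ => (1:ℝ≥0∞)) x := by
              rw [Set.indicator_of_mem (Function.mem_support.mpr h0)]
          _ ≤ _ := le_self_add
      · push_neg at h1
        calc ENNReal.ofReal (|f x| ^ p) ≤ ENNReal.ofReal (|f x| ^ q) :=
              ENNReal.ofReal_le_ofReal
                (Real.rpow_le_rpow_of_exponent_le h1.le hpq.le)
          _ ≤ _ := le_add_self
  calc Ip p f ≤ ∫⁻ x, ((Function.support f).indicator (fun _ => (1:ℝ≥0∞)) x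
        + ENNReal.ofReal (|f x| ^ q)) ∂m0 := lintegral_mono hpt
    _ = (∫⁻ x, (Function.support f).indicator (fun _ => (1:ℝ≥0∞)) x ∂m0)
        + ∫⁻ x, ENNReal.ofReal (|f x| ^ q) ∂m0 :=
        lintegral_add_left (measurable_const.indicator (measurableSet_support hm)) _
    _ = m0 (Function.support f) + ∫⁻ x, ENNReal.ofReal (|f x| ^ q) ∂m0 := by
        rw [lintegral_indicator_const (measurableSet_support hm), one_mul]
    _ < ⊤ := ENNReal.add_lt_top.mpr ⟨hsupp, hint⟩

/-- `Lp ⊆ L0 + Lq`. -/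
lemma incl_sum {p q : ℝ} (hp : 0 < p) (hpq : p < q) :
    LpS p ⊆ sumSet L0S (LpS q) := by
  intro f hf
  have hq : 0 < q := hp.trans hpq
  exact ⟨hd q f 1, hd_mem_L0S hp hq hf one_pos, tl q f 1,
    tl_mem_LpSq hp hpq hf one_pos, hd_add_tl q f 1⟩

end CSZProof


open CSZ MeasureTheory ENNReal Set in
/-- Corollary 3.5 of the paper.
Let `0 < p < q < ∞`. Every linear operator `T : L_0 + L_q → L_0 + L_q` which is a
contraction on the couple `(L_0, L_q)` restricts to a contraction on `L_p`; in particular,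
`L_p` is an interpolation space for the couple `(L_0, L_q)`. -/
theorem statement8 (p q : ℝ) (hp : 0 < p) (hpq : p < q) :
    (∀ T : (ℝ → ℝ) → (ℝ → ℝ),
      IsLinearOn T (sumSet L0S (LpS q)) →
      (∀ f ∈ sumSet L0S (LpS q), T f ∈ sumSet L0S (LpS q)) →
      BoundedWith T L0S L0Norm 1 →
      BoundedWith T (LpS q) (LpNorm q) 1 →
      BoundedWith T (LpS p) (LpNorm p) 1) ∧
    IsInterpolation L0S (LpS q) L0Norm (LpNorm q) (LpS p) (LpNorm p) := by
  constructor
  · intro T hlin _ hb0 hbq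
    exact CSZProof.main_sharp hp hpq hlin hb0 hbq
  · refine ⟨CSZProof.incl_inter hp hpq, CSZProof.incl_sum hp hpq, ?_⟩
    rintro T hlin _ ⟨M0, hM0, hb0⟩ ⟨Mq, hMq, hbq⟩
    refine ⟨(M0 + Mq ^ q) ^ (1/p), ?_, ?_⟩
    · exact Real.rpow_nonneg (add_nonneg hM0 (Real.rpow_nonneg hMq q)) _
    · exact CSZProof.main_general hp hpq hM0 hMq hlin hb0 hbq
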